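/- For every strict partition λ, every coefficient of the Schur Q-function Q_λ is divisible by 2^{l(λ)}; consequently P_λ = 2^{-l(λ)} Q_λ is a formal power series with integer coefficients. -/

import Mathlib

open scoped BigOperators

namespace SLR

/-- A partition, given as the weakly decreasing, eventually zero sequence of its
parts (`p i` is the `(i+1)`-st part). -/
def IsPartitionFun (p : ℕ → ℕ) : Prop :=
  (∀ i, p (i + 1) ≤ p i) ∧ ∃ N, p N = 0

/-- A strict partition: the positive parts strictly decrease. -/
def IsStrictPartitionFun (p : ℕ → ℕ) : Prop :=
  ∀ i, p (i + 1) < p i ∨ p (i + 1) = 0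

/-- The number `l(λ)` of (nonzero) parts of a partition. -/
noncomputable def len (p : ℕ → ℕ) : ℕ := Set.ncard {i | p i ≠ 0}

/-- The size `|λ|` of a partition: the sum of its parts. -/
noncomputable def size (p : ℕ → ℕ) : ℕ := ∑ᶠ i, p i

/-- `(i,j)` (0-indexed row, column) is a cell of the Young diagram of `p`. -/
def YCell (p : ℕ → ℕ) (i j : ℕ) : Prop := j < p i

/-- `(i,j)` is a cell of the shifted diagram of the strict partition `p`:
row `i` has `p i` boxes starting in column `i`. -/
def SCell (p : ℕ → ℕ) (i j : ℕ) : Prop := i ≤ j ∧ j < i + p i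

/-- Cell of the skew Young diagram `ν/μ`. -/
def SkewYCell (nu mu : ℕ → ℕ) (i j : ℕ) : Prop := YCell nu i j ∧ ¬ YCell mu i j

/-- Cell of the skew shifted diagram `ν/μ`. -/
def SkewSCell (nu mu : ℕ → ℕ) (i j : ℕ) : Prop := SCell nu i j ∧ ¬ SCell mu i j

/-- Letters of the marked alphabet `1' < 1 < 2' < 2 < ⋯` are encoded by positive
integers: `k'` is encoded as `2k-1` and `k` as `2k`; the order of `ℕ` restricts to
the order of the alphabet, and a letter is marked iff its code is odd.
`mval e` is the value `k` of the letter encoded by `e`. -/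
def mval (e : ℕ) : ℕ := (e + 1) / 2

/-- A skew semistandard Young tableau of shape `ν/μ` (over the unmarked alphabet
`1 < 2 < ⋯`), encoded as the function giving the entry of each cell (`0` outside
the shape): rows weakly increase, columns strictly increase. -/
def IsSkewSSYT (nu mu : ℕ → ℕ) (T : ℕ → ℕ → ℕ) : Prop :=
  (∀ i j, T i j ≠ 0 ↔ SkewYCell nu mu i j) ∧
  (∀ i j j', j ≤ j' → SkewYCell nu mu i j → SkewYCell nu mu i j' → T i j ≤ T i j') ∧
  (∀ i i' j, i < i' → SkewYCell nu mu i j → SkewYCell nu mu i' j → T i j < T i' j)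

/-- A filling of the cells given by `cell` with letters of the marked alphabet
(encoded as above), with weakly increasing rows and columns, at most one `k'`
in each row and at most one `k` in each column, for every `k`. -/
def IsMarkedFilling (cell : ℕ → ℕ → Prop) (T : ℕ → ℕ → ℕ) : Prop :=
  (∀ i j, T i j ≠ 0 ↔ cell i j) ∧
  (∀ i j j', j ≤ j' → cell i j → cell i j' → T i j ≤ T i j') ∧
  (∀ i i' j, i ≤ i' → cell i j → cell i' j → T i j ≤ T i' j) ∧
  (∀ i j j', j < j' → cell i j → cell i j' → T i j = T i j' → T i j % 2 = 0) ∧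
  (∀ i i' j, i < i' → cell i j → cell i' j → T i j = T i' j → T i j % 2 = 1)

/-- The Schur function `s_p`, as a formal power series in the variables
`x_1, x_2, ⋯` (variable `x_{k+1}` is indexed by `k : ℕ`): the coefficient of the
monomial with exponents `d` is the number of semistandard Young tableaux of
shape `p` and content `d`. -/
noncomputable def schur (p : ℕ → ℕ) : MvPowerSeries ℕ ℚ :=
  fun d => (Nat.card {T : ℕ → ℕ → ℕ //
    IsSkewSSYT p (fun _ => 0) T ∧
      ∀ k, d k = Set.ncard {c : ℕ × ℕ | T c.1 c.2 = k + 1}} : ℚ)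

/-- The Schur Q-function `Q_p` of a strict partition `p`: the coefficient of the
monomial with exponents `d` is the number of shifted tableaux of shifted shape `p`
(fillings by the marked alphabet) of content `d`. -/
noncomputable def schurQ (p : ℕ → ℕ) : MvPowerSeries ℕ ℚ :=
  fun d => (Nat.card {T : ℕ → ℕ → ℕ //
    IsMarkedFilling (SCell p) T ∧
      ∀ k, d k = Set.ncard {c : ℕ × ℕ | mval (T c.1 c.2) = k + 1}} : ℚ)

/-- `P_λ = 2^{-l(λ)} Q_λ`. -/
noncomputable def Pfun (p : ℕ → ℕ) : MvPowerSeries ℕ ℚ :=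
  ((2 : ℚ) ^ len p)⁻¹ • schurQ p

/-- The content of a marked filling is `γ`: `γ k` is the number of entries equal
to `k+1` or `(k+1)'`. -/
def HasContent (T : ℕ → ℕ → ℕ) (γ : ℕ → ℕ) : Prop :=
  ∀ k, γ k = Set.ncard {c : ℕ × ℕ | mval (T c.1 c.2) = k + 1}

/-- The word of a skew shifted tableau: rows read left to right, bottom row first. -/
noncomputable def sword (nu mu : ℕ → ℕ) (T : ℕ → ℕ → ℕ) : List ℕ :=
  (List.range (len nu)).reverse.flatMap fun i =>
    ((List.range (i + nu i)).filter fun j => decide (i + mu i ≤ j)).map (T i)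

/-- The word of a filling of the Young diagram of `mu`: rows read left to right,
bottom row first. -/
noncomputable def yword (mu : ℕ → ℕ) (T : ℕ → ℕ → ℕ) : List ℕ :=
  (List.range (len mu)).reverse.flatMap fun i => (List.range (mu i)).map (T i)

/-- The statistics `m_i(j)`, `0 ≤ j ≤ 2n`, of a word `w` over the marked alphabet:
for `j ≤ n`, the multiplicity of (unmarked) `i` among `w_n, …, w_{n-j+1}`; for
`n < j ≤ 2n`, the multiplicity of `i'` among `w_1, …, w_{j-n}` plus the
multiplicity of `i` in the whole word. -/
def mstat (w : List ℕ) (i j : ℕ) : ℕ :=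
  if j ≤ w.length then (w.reverse.take j).count (2 * i)
  else (w.take (j - w.length)).count (2 * i - 1) + w.count (2 * i)

/-- `w` is a shifted lattice word. -/
def IsShiftedLatticeWord (w : List ℕ) : Prop :=
  ∀ i, 1 ≤ i → ∀ j,
    (j < w.length → mstat w i j = mstat w (i - 1) j →
      w.getD (w.length - j - 1) 0 ≠ 2 * i ∧ w.getD (w.length - j - 1) 0 ≠ 2 * i - 1) ∧
    (w.length ≤ j → j < 2 * w.length → mstat w i j = mstat w (i - 1) j →
      w.getD (j - w.length) 0 ≠ 2 * (i - 1) ∧ w.getD (j - w.length) 0 ≠ 2 * i - 1)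

/-- Condition (F1)/(G1): for every `k`, the leftmost of the letters `k, k'`
occurring in `w` is unmarked. -/
def LeftmostUnmarked (w : List ℕ) : Prop :=
  ∀ k p, 1 ≤ k → w.getD p 0 = 2 * k - 1 → ∃ q, q < p ∧ w.getD q 0 = 2 * k

/-- Stembridge's tableaux: skew shifted tableaux of shape `ν/μ` and content `λ`
satisfying (F1) and (F2). -/
def IsStembridgeTab (lam mu nu : ℕ → ℕ) (T : ℕ → ℕ → ℕ) : Prop :=
  IsMarkedFilling (SkewSCell nu mu) T ∧ HasContent T lam ∧
  LeftmostUnmarked (sword nu mu T) ∧ IsShiftedLatticeWord (sword nu mu T)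

/-- The number given to the cell `(i,j)` of the skew shifted diagram `ν/μ` by the
shifted reverse filling (rows top to bottom, right to left within each row). -/
def srfNum (nu mu : ℕ → ℕ) (i j : ℕ) : ℕ :=
  (∑ r ∈ Finset.range i, (nu r - mu r)) + (i + nu i - j)

/-- The number given to the cell `(i,j)` of the skew Young diagram `ν/λ` by the
reverse filling (rows top to bottom, right to left within each row). -/
def yrfNum (nu la : ℕ → ℕ) (i j : ℕ) : ℕ :=
  (∑ r ∈ Finset.range i, (nu r - la r)) + (nu i - j)

/-- Rank of an encoded letter in the order `1 < 2 < ⋯ < N < N' < ⋯ < 2' < 1'`. -/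
def rnk (N e : ℕ) : ℕ := if e % 2 = 0 then e / 2 else 2 * N + 1 - (e + 1) / 2

/-- The list of entries of row `i` of a filling of the Young diagram of `sh`. -/
def rowL (sh : ℕ → ℕ) (T : ℕ → ℕ → ℕ) (i : ℕ) : List ℕ := (List.range (sh i)).map (T i)

/-- Row `i`, reordered according to the order `1 < 2 < ⋯ < N < N' < ⋯ < 2' < 1'`. -/
def rowS (N : ℕ) (sh : ℕ → ℕ) (T : ℕ → ℕ → ℕ) (i : ℕ) : List ℕ :=
  (rowL sh T i).mergeSort fun a b => decide (rnk N a ≤ rnk N b)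

/-- The number of entries of row `i` of rank less than `r` in the order
`1 < 2 < ⋯ < N < N' < ⋯ < 2' < 1'`. -/
def cntLess (N : ℕ) (sh : ℕ → ℕ) (T : ℕ → ℕ → ℕ) (i r : ℕ) : ℕ :=
  (rowL sh T i).countP fun e => decide (rnk N e < r)

/-- Condition (C4) on a labelled tableau of shape `sh`. -/
def C4 (N : ℕ) (sh : ℕ → ℕ) (T : ℕ → ℕ → ℕ) : Prop :=
  (∀ i c, c < sh (i + 1) →
    rnk N ((rowS N sh T i).getD c 0) < rnk N ((rowS N sh T (i + 1)).getD c 0)) ∧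
  (∀ i j, 1 ≤ i → 1 ≤ j → (2 * j - 1) ∈ rowL sh T i →
    cntLess N sh T i j < cntLess N sh T (i - 1) j) ∧
  (∀ i j, 1 ≤ j → (2 * j) ∈ rowL sh T i →
    cntLess N sh T (i + 1) (2 * N + 1 - j) < cntLess N sh T i (2 * N + 1 - j))

/-- Membership in the set `Õ(ν/μ)`: `T` is a filling of the (unshifted) Young
diagram of `sh` by the alphabet `1' < 1 < ⋯ < N' < N` (`N = |ν/μ|`), where for
each `1 ≤ k ≤ N` exactly one of `k, k'` occurs, satisfying the conditions
(C1)–(C4) relative to the shifted reverse filling of `ν/μ`. -/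
def InOtilde (nu mu sh : ℕ → ℕ) (T : ℕ → ℕ → ℕ) : Prop :=
  (∀ i j, T i j ≠ 0 ↔ YCell sh i j) ∧
  (∀ i j, YCell sh i j → T i j ≤ 2 * (size nu - size mu)) ∧
  (∀ k, 1 ≤ k → k ≤ size nu - size mu →
      ∃! c : ℕ × ℕ, YCell sh c.1 c.2 ∧ mval (T c.1 c.2) = k) ∧
  -- (C1): if `k` and `k+1` lie in the same row of the shifted reverse filling,
  -- then the entry of value `k+1` lies weakly above the entry of value `k` when
  -- the latter is unmarked, and strictly above it when it is marked.
  (∀ k i j, SkewSCell nu mu i j → SkewSCell nu mu i (j + 1) → srfNum nu mu i (j + 1) = k →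
    ∀ a b a' b', YCell sh a b → YCell sh a' b' →
      mval (T a b) = k → mval (T a' b') = k + 1 →
        (T a b % 2 = 0 → a' ≤ a) ∧ (T a b % 2 = 1 → a' < a)) ∧
  -- (C2): if `h` lies directly below `k` in the shifted reverse filling, then the
  -- entry of value `h` lies weakly below the entry of value `k` when the latter is
  -- marked, and strictly below it when it is unmarked.
  (∀ i j, SkewSCell nu mu i j → SkewSCell nu mu (i + 1) j →
    ∀ a b a' b', YCell sh a b → YCell sh a' b' →
      mval (T a b) = srfNum nu mu i j → mval (T a' b') = srfNum nu mu (i + 1) j →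
        (T a b % 2 = 1 → a ≤ a') ∧ (T a b % 2 = 0 → a < a')) ∧
  -- (C3): the rightmost letter in each row is unmarked.
  (∀ i j, YCell sh i j → ¬ YCell sh i (j + 1) → T i j % 2 = 0) ∧
  C4 (size nu - size mu) sh T

/-- Schensted row-insertion of `x` into a tableau given as its list of rows. -/
def insert1 : List (List ℕ) → ℕ → List (List ℕ)
  | [], x => [[x]]
  | r :: rs, x =>
    match r.findIdx? (fun y => decide (x < y)) with
    | none => (r ++ [x]) :: rs
    | some j => (r.set j x) :: insert1 rs (r.getD j 0)

/-- The reading word of a tableau given as its list of rows: rows left to right,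
bottom row first. -/
def lword (U : List (List ℕ)) : List ℕ := U.reverse.flatten

/-- The product tableau `A.U`: row-insert the letters of the word of `U`
successively into `A`. -/
def prodT (A U : List (List ℕ)) : List (List ℕ) := (lword U).foldl insert1 A

/-- The transpose of a tableau given as its list of rows. -/
def transposeL (U : List (List ℕ)) : List (List ℕ) :=
  (List.range (U.headD []).length).map fun j => U.filterMap fun r => r[j]?

/-- `U` (as a list of rows) is a standard Young tableau of shape `mu`. -/
def IsSYTL (mu : ℕ → ℕ) (U : List (List ℕ)) : Prop :=
  U.length = len mu ∧
  (∀ i, (U.getD i []).length = mu i) ∧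
  (U.flatten).Perm (List.range' 1 (size mu)) ∧
  (∀ i j, j + 1 < mu i → (U.getD i []).getD j 0 < (U.getD i []).getD (j + 1) 0) ∧
  (∀ i j, j < mu (i + 1) → (U.getD i []).getD j 0 < (U.getD (i + 1) []).getD j 0)

/-- `U` (as a list of rows) is a semistandard Young tableau of shape `mu`. -/
def IsSSYTL (mu : ℕ → ℕ) (U : List (List ℕ)) : Prop :=
  U.length = len mu ∧
  (∀ i, (U.getD i []).length = mu i) ∧
  (∀ i j, j < mu i → 1 ≤ (U.getD i []).getD j 0) ∧
  (∀ i j, j + 1 < mu i → (U.getD i []).getD j 0 ≤ (U.getD i []).getD (j + 1) 0) ∧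
  (∀ i j, j < mu (i + 1) → (U.getD i []).getD j 0 < (U.getD (i + 1) []).getD j 0)

/-- The entry of the canonical standard shifted tableau `T_λ` (filled row by row,
from top to bottom and left to right, with `1, 2, …, n`) at shifted cell `(r,c)`. -/
def tval (lam : ℕ → ℕ) (r c : ℕ) : ℕ := (∑ t ∈ Finset.range r, lam t) + (c - r) + 1

/-- Row `i` of `s(T_λ)`, the tableau obtained by gluing `T_λ` and its reflection
through the main diagonal along that diagonal (diagonal boxes doubled). -/
def sTrow (lam : ℕ → ℕ) (i : ℕ) : List ℕ :=
  ((List.range i).filterMap fun c => if i < c + lam c then some (tval lam c i) else none)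
    ++ (if 0 < lam i then [tval lam i i] else [])
    ++ ((List.range (lam i)).map fun t => tval lam i (i + t))

/-- `s(T_λ)` as a list of rows. -/
def sT (lam : ℕ → ℕ) : List (List ℕ) := (List.range (lam 0)).map (sTrow lam)

/-- Update of a filling at one cell. -/
def upd2 (T : ℕ → ℕ → ℕ) (i j v : ℕ) : ℕ → ℕ → ℕ :=
  fun a b => if a = i ∧ b = j then v else T a b

/-- One jeu de taquin slide, starting with the hole at `(i,j)`: repeatedly move
into the hole the smaller of its right and lower neighbours (the lower one in case
of a tie), until both are missing (`fuel` is a recursion bound). -/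
def slideAux : ℕ → (ℕ → ℕ → ℕ) → ℕ → ℕ → (ℕ → ℕ → ℕ)
  | 0, T, _, _ => T
  | fuel + 1, T, i, j =>
    let r := T i (j + 1)
    let d := T (i + 1) j
    if r = 0 ∧ d = 0 then T
    else if d = 0 ∨ (r ≠ 0 ∧ r < d) then
      slideAux fuel (upd2 (upd2 T i j r) i (j + 1) 0) i (j + 1)
    else
      slideAux fuel (upd2 (upd2 T i j d) (i + 1) j 0) (i + 1) j

/-- The last index of a nonzero entry of a list. -/
def lastPos (l : List ℕ) : Option ℕ :=
  (List.range l.length).reverse.find? fun i => decide (l.getD i 0 ≠ 0)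

/-- Jeu de taquin rectification of a skew Young tableau whose inner shape is the
partition `m` (as a list): while `m` is nonempty, slide out the inner corner at the
end of the last row of `m`.  Since the rectification is independent of the choice
of inner corners, this computes the rectification. -/
def rectSteps (B : ℕ) : ℕ → List ℕ → (ℕ → ℕ → ℕ) → (ℕ → ℕ → ℕ)
  | 0, _, T => T
  | steps + 1, m, T =>
    match lastPos m with
    | none => T
    | some r => rectSteps B steps (m.set r (m.getD r 0 - 1)) (slideAux B T r (m.getD r 0 - 1))

/-- Shifted jeu de taquin rectification of a skew shifted tableau whose inner
(strict) shape is `m`: while `m` is nonempty, slide out the inner corner at the end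
of the last row of `m`. -/
def srectSteps (B : ℕ) : ℕ → List ℕ → (ℕ → ℕ → ℕ) → (ℕ → ℕ → ℕ)
  | 0, _, T => T
  | steps + 1, m, T =>
    match lastPos m with
    | none => T
    | some r =>
      srectSteps B steps (m.set r (m.getD r 0 - 1)) (slideAux B T r (r + m.getD r 0 - 1))

/-- The list `[μ_1, …, μ_l]` of parts of a partition given as a function. -/
noncomputable def muList (mu : ℕ → ℕ) : List ℕ := (List.range (len mu)).map mu

/-- Jeu de taquin rectification of a filling of the skew Young diagram `ν/μ`. -/
noncomputable def RectOf (nu mu : ℕ → ℕ) (T : ℕ → ℕ → ℕ) : ℕ → ℕ → ℕ :=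
  rectSteps (size nu + len nu + nu 0 + 2) (size mu) (muList mu) T

/-- Shifted jeu de taquin rectification of a filling of the skew shifted
diagram `ν/μ`. -/
noncomputable def sRectOf (nu mu : ℕ → ℕ) (T : ℕ → ℕ → ℕ) : ℕ → ℕ → ℕ :=
  srectSteps (size nu + len nu + nu 0 + 2) (size mu) (muList mu) T

/-- `s(T)`: glue an (unmarked) skew shifted tableau `T` with its reflection through
the main diagonal, the diagonal boxes being doubled. -/
def glue (T : ℕ → ℕ → ℕ) : ℕ → ℕ → ℕ := fun i j => if j ≤ i then T j i else T i (j - 1)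

/-- `λ̃`: the partition whose Young diagram is the union of the shifted diagram of
the strict partition `λ` and its reflection through the main diagonal. -/
noncomputable def tilde (lam : ℕ → ℕ) : ℕ → ℕ :=
  fun i => Set.ncard {j | SCell lam i j ∨ SCell lam j i}

/-- The list of rows of `λ̃`. -/
noncomputable def tildeList (lam : ℕ → ℕ) : List ℕ := (List.range (lam 0)).map (tilde lam)

/-- The conjugate (transpose) partition `μ^t`. -/
noncomputable def conj (mu : ℕ → ℕ) : ℕ → ℕ := fun i => Set.ncard {j | i < mu j}

/-- A standard skew shifted tableau of shape `ν/μ`: no marked entries, entries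
`1, 2, …, |ν/μ|`, each occurring exactly once, increasing along rows and columns. -/
def IsStdSkewShifted (nu mu : ℕ → ℕ) (T : ℕ → ℕ → ℕ) : Prop :=
  (∀ i j, T i j ≠ 0 ↔ SkewSCell nu mu i j) ∧
  (∀ i j, SkewSCell nu mu i j → T i j ≤ size nu - size mu) ∧
  (∀ i j j', j < j' → SkewSCell nu mu i j → SkewSCell nu mu i j' → T i j < T i j') ∧
  (∀ i i' j, i < i' → SkewSCell nu mu i j → SkewSCell nu mu i' j → T i j < T i' j) ∧
  (∀ k, 1 ≤ k → k ≤ size nu - size mu → ∃! c : ℕ × ℕ, T c.1 c.2 = k)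

/-- A skew shifted semistandard tableau with no marked entries: rows weakly
increasing, columns strictly increasing. -/
def IsSkewShiftedSSYT (nu mu : ℕ → ℕ) (T : ℕ → ℕ → ℕ) : Prop :=
  (∀ i j, T i j ≠ 0 ↔ SkewSCell nu mu i j) ∧
  (∀ i j j', j ≤ j' → SkewSCell nu mu i j → SkewSCell nu mu i j' → T i j ≤ T i j') ∧
  (∀ i i' j, i < i' → SkewSCell nu mu i j → SkewSCell nu mu i' j → T i j < T i' j)

/-- The map sending a skew shifted tableau `T` of shape `ν/μ` with word
`w(T) = w_1 ⋯ w_N` to the tableau of unshifted shape in which, for each `i`, the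
value `N+1-i` (marked iff `w_i` is marked) is placed in row `k`, where
`w_i ∈ {k, k'}` (each row filled from left to right as `i` decreases). -/
noncomputable def stemToO (nu mu : ℕ → ℕ) (T : ℕ → ℕ → ℕ) : ℕ → ℕ → ℕ := fun k c =>
  (let w := sword nu mu T
   (List.range w.length).filterMap fun t =>
     let e := w.getD (w.length - t - 1) 0
     if mval e = k + 1 then
       some (if e % 2 = 1 then 2 * (t + 1) - 1 else 2 * (t + 1))
     else none).getD c 0

/-- A perforated tableau of shape `γ`: a partial filling (0 = empty) of the cells
of `γ`, with strictly increasing columns, such that every entry weakly northwest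
of an entry is at most that entry. -/
def IsPerforated (γ : ℕ → ℕ → Prop) (S : ℕ → ℕ → ℕ) : Prop :=
  (∀ i j, S i j ≠ 0 → γ i j) ∧
  (∀ i i' j, i < i' → S i j ≠ 0 → S i' j ≠ 0 → S i j < S i' j) ∧
  (∀ i j i' j', i' ≤ i → j' ≤ j → S i' j' ≠ 0 → S i j ≠ 0 → S i' j' ≤ S i j)

/-- One step of the switching procedure on a perforated pair `(S,T)` filling `γ`:
interchange an entry `s` of `S` with an adjacent entry `t` of `T` lying directly
below or directly to the right of `s`, provided both parts remain perforated
tableaux of `γ`. -/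
def SwitchStep (γ : ℕ → ℕ → Prop) (p q : (ℕ → ℕ → ℕ) × (ℕ → ℕ → ℕ)) : Prop :=
  ∃ i j i' j', p.1 i j ≠ 0 ∧ p.2 i' j' ≠ 0 ∧
    ((i' = i ∧ j' = j + 1) ∨ (i' = i + 1 ∧ j' = j)) ∧
    q.1 = upd2 (upd2 p.1 i j 0) i' j' (p.1 i j) ∧
    q.2 = upd2 (upd2 p.2 i' j' 0) i j (p.2 i' j') ∧
    IsPerforated γ q.1 ∧ IsPerforated γ q.2

/-- The result of the switching procedure applied to the pair `p = (S,T)`: the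
(unique) pair reachable from `p` by switching steps to which no further step
applies; its first component is `S_T` and its second is `^S T`. -/
noncomputable def switchResult (γ : ℕ → ℕ → Prop) (p : (ℕ → ℕ → ℕ) × (ℕ → ℕ → ℕ)) :
    (ℕ → ℕ → ℕ) × (ℕ → ℕ → ℕ) :=
  Classical.epsilon fun q =>
    Relation.ReflTransGen (SwitchStep γ) p q ∧ ∀ r, ¬ SwitchStep γ q r

/-- The Schur Q-function, with integer coefficients. -/
noncomputable def schurQZ (p : ℕ → ℕ) : MvPowerSeries ℕ ℤ :=
  fun d => (Nat.card {T : ℕ → ℕ → ℕ //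
    IsMarkedFilling (SCell p) T ∧
      ∀ k, d k = Set.ncard {c : ℕ × ℕ | mval (T c.1 c.2) = k + 1}} : ℤ)


/-- Toggle marks on the diagonal according to `c`. -/
def toggle (c : ℕ → Bool) (T : ℕ → ℕ → ℕ) : ℕ → ℕ → ℕ :=
  fun i j => if i = j then (if c i then 2 * mval (T i j) - 1 else 2 * mval (T i j)) else T i j

lemma toggle_apply (c : ℕ → Bool) (T : ℕ → ℕ → ℕ) (i j : ℕ) :
    toggle c T i j
      = if i = j then (if c i then 2 * mval (T i j) - 1 else 2 * mval (T i j)) else T i j := rfl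

lemma toggle_off (c : ℕ → Bool) {T : ℕ → ℕ → ℕ} {i j : ℕ} (h : i ≠ j) :
    toggle c T i j = T i j := by rw [toggle_apply, if_neg h]

lemma mval_toggle (c : ℕ → Bool) (T : ℕ → ℕ → ℕ) (i j : ℕ) :
    mval (toggle c T i j) = mval (T i j) := by
  rw [toggle_apply]
  by_cases h : i = j
  · rw [if_pos h]; unfold mval; split <;> omega
  · rw [if_neg h]

lemma toggle_toggle (c c' : ℕ → Bool) (T : ℕ → ℕ → ℕ) :
    toggle c' (toggle c T) = toggle c' T := by
  funext i j
  rw [toggle_apply c', toggle_apply c', mval_toggle]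
  by_cases h : i = j
  · rw [if_pos h, if_pos h]
  · rw [if_neg h, if_neg h, toggle_off c h]

lemma toggle_eq_self {c : ℕ → Bool} {T : ℕ → ℕ → ℕ}
    (h : ∀ i, (c i = true → T i i % 2 = 1) ∧ (c i = false → T i i % 2 = 0)) :
    toggle c T = T := by
  funext i j
  rw [toggle_apply]
  by_cases hd : i = j
  · subst hd
    rw [if_pos rfl]
    rcases h i with ⟨h1, h2⟩
    cases hc : c i
    · have h3 := h2 hc
      rw [if_neg (by simp)]; unfold mval; omega
    · have h3 := h1 hc
      rw [if_pos rfl]; unfold mval; omega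
  · rw [if_neg hd]

lemma toggle_zero_iff (c : ℕ → Bool) (T : ℕ → ℕ → ℕ) (i j : ℕ) :
    toggle c T i j = 0 ↔ T i j = 0 := by
  rw [toggle_apply]
  by_cases h : i = j
  · rw [if_pos h]; subst h; split <;> (unfold mval; omega)
  · rw [if_neg h]

lemma toggle_false_even (T : ℕ → ℕ → ℕ) (i : ℕ) :
    toggle (fun _ => false) T i i % 2 = 0 := by
  rw [toggle_apply, if_pos rfl]; simp

lemma scell_diag {lam : ℕ → ℕ} {i j : ℕ} (h : SCell lam i j) : SCell lam i i := by
  rcases h with ⟨h1, h2⟩; exact ⟨le_refl i, by omega⟩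

lemma toggle_filling {lam : ℕ → ℕ} (c : ℕ → Bool) {T : ℕ → ℕ → ℕ}
    (hT : IsMarkedFilling (SCell lam) T) :
    IsMarkedFilling (SCell lam) (toggle c T) := by
  obtain ⟨h0, hrow, hcol, hrowE, hcolO⟩ := hT
  have hb : ∀ i, 2 * mval (T i i) - 1 ≤ toggle c T i i ∧ toggle c T i i ≤ 2 * mval (T i i) := by
    intro i; rw [toggle_apply, if_pos rfl]; split <;> omega
  have hR : ∀ i j, i < j → SCell lam i j → 2 * mval (T i i) ≤ T i j := by
    intro i j hij hcell
    have hdi := scell_diag hcell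
    have h1 : T i i ≤ T i j := hrow i i j (le_of_lt hij) hdi hcell
    have h2 : T i i ≠ 0 := (h0 i i).2 hdi
    by_contra hlt
    have heq : T i i = T i j := by unfold mval at hlt; omega
    have := hrowE i i j hij hdi hcell heq
    unfold mval at hlt; omega
  have hC : ∀ r i, r < i → SCell lam r i → SCell lam i i → T r i ≤ 2 * mval (T i i) - 1 := by
    intro r i hri hcell hdi
    have h1 : T r i ≤ T i i := hcol r i i (le_of_lt hri) hcell hdi
    have h2 : T i i ≠ 0 := (h0 i i).2 hdi
    by_contra hlt
    have heq : T r i = T i i := by unfold mval at hlt; omega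
    have := hcolO r i i hri hcell hdi heq
    unfold mval at hlt; omega
  refine ⟨?_, ?_, ?_, ?_, ?_⟩
  · intro i j
    rw [ne_eq, toggle_zero_iff]
    exact h0 i j
  · intro i j j' hjj' hc hc'
    by_cases h : i = j
    · subst h
      by_cases h' : i = j'
      · subst h'; exact le_refl _
      · have hij' : i < j' := lt_of_le_of_ne hjj' h'
        have hr := hR i j' hij' hc'
        have hb2 := (hb i).2
        rw [toggle_off c h']
        omega
    · have h' : i ≠ j' := by
        have := hc.1; omega
      rw [toggle_off c h, toggle_off c h']
      exact hrow i j j' hjj' hc hc'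
  · intro i i' j hii' hc hc'
    by_cases he : i = i'
    · subst he; exact le_refl _
    · have hlt : i < i' := lt_of_le_of_ne hii' he
      have hij : i ≠ j := by have := hc'.1; omega
      rw [toggle_off c hij]
      by_cases hd : i' = j
      · subst hd
        have hle := hC i i' hlt hc hc'
        have hb1 := (hb i').1
        omega
      · rw [toggle_off c hd]
        exact hcol i i' j hii' hc hc'
  · intro i j j' hjj' hc hc' heq
    have hij' : i ≠ j' := by have := hc.1; omega
    rw [toggle_off c hij'] at heq
    by_cases h : i = j
    · subst h
      have hr := hR i j' (by have := hc.1; omega) hc'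
      have hb1 := (hb i).1
      have hb2 := (hb i).2
      omega
    · rw [toggle_off c h] at heq ⊢
      exact hrowE i j j' hjj' hc hc' heq
  · intro i i' j hii' hc hc' heq
    have hij : i ≠ j := by have := hc'.1; omega
    rw [toggle_off c hij] at heq ⊢
    by_cases hd : i' = j
    · subst hd
      have hle := hC i i' hii' hc hc'
      have hb1 := (hb i').1
      have hb2 := (hb i').2
      have h2 : T i' i' ≠ 0 := (h0 i' i').2 hc'
      unfold mval at *
      omega
    · rw [toggle_off c hd] at heq
      exact hcolO i i' j hii' hc hc' heq

lemma toggle_content (c : ℕ → Bool) (T : ℕ → ℕ → ℕ) (k : ℕ) :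
    {p : ℕ × ℕ | mval (toggle c T p.1 p.2) = k + 1}
      = {p : ℕ × ℕ | mval (T p.1 p.2) = k + 1} := by
  ext p; simp [mval_toggle]

lemma toggle_pd {lam : ℕ → ℕ} (c : ℕ → Bool) (d : ℕ →₀ ℕ) {T : ℕ → ℕ → ℕ}
    (h : IsMarkedFilling (SCell lam) T ∧
      ∀ k, d k = Set.ncard {c' : ℕ × ℕ | mval (T c'.1 c'.2) = k + 1}) :
    IsMarkedFilling (SCell lam) (toggle c T) ∧
      ∀ k, d k = Set.ncard {c' : ℕ × ℕ | mval (toggle c T c'.1 c'.2) = k + 1} :=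
  ⟨toggle_filling c h.1, fun k => by rw [toggle_content]; exact h.2 k⟩

lemma len_iff {lam : ℕ → ℕ} (hlam : IsStrictPartitionFun lam) (i : ℕ) :
    lam i ≠ 0 ↔ i < len lam := by
  have hstep : ∀ j, lam j = 0 → lam (j + 1) = 0 := by
    intro j hj; rcases hlam j with h | h
    · omega
    · exact h
  have hmono : ∀ k j, lam j = 0 → lam (j + k) = 0 := by
    intro k
    induction k with
    | zero => intro j h; exact h
    | succ n ih => intro j h; exact hstep (j + n) (ih j h)
  have hdec : ∀ n, (∀ m, m ≤ n → lam m ≠ 0) → lam n + n ≤ lam 0 := by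
    intro n
    induction n with
    | zero => intro _; omega
    | succ n ih =>
      intro h
      have h1 := ih (fun m hm => h m (by omega))
      have h2 : lam (n + 1) < lam n := by
        rcases hlam n with h' | h'
        · exact h'
        · exact absurd h' (h (n + 1) (le_refl _))
      omega
  have hex : ∃ N, lam N = 0 := by
    by_contra hno
    push_neg at hno
    have h1 := hdec (lam 0 + 1) (fun m _ => hno m)
    have h2 := hno (lam 0 + 1)
    omega
  have hNzero : lam (Nat.find hex) = 0 := Nat.find_spec hex
  have hset : {j | lam j ≠ 0} = Set.Iio (Nat.find hex) := by
    ext j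
    simp only [Set.mem_setOf_eq, Set.mem_Iio]
    constructor
    · intro hj
      by_contra hge
      push_neg at hge
      have := hmono (j - Nat.find hex) (Nat.find hex) hNzero
      rw [show Nat.find hex + (j - Nat.find hex) = j by omega] at this
      exact hj this
    · intro hj
      exact Nat.find_min hex hj
  have hlen : len lam = Nat.find hex := by
    rw [len, hset, ← Finset.coe_range, Set.ncard_coe_finset, Finset.card_range]
  rw [hlen, ← Set.mem_Iio, ← hset]
  rfl

/-- For every strict partition `λ`, every coefficient of the
Schur Q-function `Q_λ` is divisible by `2^{l(λ)}`; consequently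
`P_λ = 2^{-l(λ)} Q_λ` is a formal power series with integer coefficients. -/
theorem schurQ_coeff_divisible
    (lam : ℕ → ℕ) (hlam : IsStrictPartitionFun lam) :
    (∀ d : ℕ →₀ ℕ, (2 ^ len lam : ℤ) ∣ MvPowerSeries.coeff d (schurQZ lam)) ∧
    ∃ P : MvPowerSeries ℕ ℤ, schurQZ lam = (2 ^ len lam : ℤ) • P := by
  have hli := len_iff hlam
  have key : ∀ d : ℕ →₀ ℕ,
      (schurQZ lam) d = (2 : ℤ) ^ len lam *
        (Nat.card {T : ℕ → ℕ → ℕ // (IsMarkedFilling (SCell lam) T ∧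
          ∀ k, d k = Set.ncard {c : ℕ × ℕ | mval (T c.1 c.2) = k + 1}) ∧
          ∀ i, T i i % 2 = 0} : ℤ) := by
    intro d
    have e : {T : ℕ → ℕ → ℕ // IsMarkedFilling (SCell lam) T ∧
          ∀ k, d k = Set.ncard {c : ℕ × ℕ | mval (T c.1 c.2) = k + 1}} ≃
        (Fin (len lam) → Bool) × {T : ℕ → ℕ → ℕ // (IsMarkedFilling (SCell lam) T ∧
          ∀ k, d k = Set.ncard {c : ℕ × ℕ | mval (T c.1 c.2) = k + 1}) ∧
          ∀ i, T i i % 2 = 0} := by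
      refine ⟨fun T => ⟨fun i => decide (T.1 i.1 i.1 % 2 = 1),
          ⟨toggle (fun _ => false) T.1, ⟨toggle_pd _ d T.2, fun i => toggle_false_even _ _⟩⟩⟩,
        fun p => ⟨toggle (fun i => if h : i < len lam then p.1 ⟨i, h⟩ else false) p.2.1,
          toggle_pd _ d p.2.2.1⟩, ?_, ?_⟩
      · intro T
        obtain ⟨hmf, hcont⟩ := T.2
        obtain ⟨h0, -, -, -, -⟩ := hmf
        apply Subtype.ext
        dsimp only
        rw [toggle_toggle]
        apply toggle_eq_self
        intro i
        by_cases h : i < len lam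
        · simp only [dif_pos h]
          constructor
          · intro hc; simpa using hc
          · intro hc; simp at hc; omega
        · simp only [dif_neg h]
          refine ⟨fun hc => by simp at hc, fun _ => ?_⟩
          have hz : lam i = 0 := by
            by_contra hne; exact h ((hli i).1 hne)
          have hnc : ¬ SCell lam i i := by
            rintro ⟨_, h2⟩; omega
          have hzz : T.1 i i = 0 := by
            by_contra hne; exact hnc ((h0 i i).1 hne)
          omega
      · intro p
        obtain ⟨ε, T⟩ := p
        dsimp only
        refine Prod.ext ?_ ?_
        · funext i
          obtain ⟨hmf, heven⟩ := T.2
          obtain ⟨⟨h0, -, -, -, -⟩, -⟩ := hmf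
          obtain ⟨i, hi⟩ := i
          have hcell : SCell lam i i := ⟨le_refl _, by have := (hli i).2 hi; omega⟩
          have hne : T.1 i i ≠ 0 := (h0 i i).2 hcell
          have hm : 1 ≤ mval (T.1 i i) := by unfold mval; omega
          dsimp only
          simp only [toggle_apply, eq_self_iff_true, if_true]
          simp only [dif_pos hi]
          cases hε : ε ⟨i, hi⟩ <;>
            simp [hε, decide_eq_false_iff_not, decide_eq_true_eq] <;> omega
        · apply Subtype.ext
          dsimp only
          rw [toggle_toggle]
          apply toggle_eq_self
          intro i
          exact ⟨fun hc => by simp at hc, fun _ => T.2.2 i⟩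
    have hcard : Nat.card {T : ℕ → ℕ → ℕ // IsMarkedFilling (SCell lam) T ∧
          ∀ k, d k = Set.ncard {c : ℕ × ℕ | mval (T c.1 c.2) = k + 1}}
        = 2 ^ len lam * Nat.card {T : ℕ → ℕ → ℕ // (IsMarkedFilling (SCell lam) T ∧
          ∀ k, d k = Set.ncard {c : ℕ × ℕ | mval (T c.1 c.2) = k + 1}) ∧
          ∀ i, T i i % 2 = 0} := by
      rw [Nat.card_congr e, Nat.card_prod]
      congr 1
      simp [Nat.card_eq_fintype_card]
    show ((Nat.card {T : ℕ → ℕ → ℕ // IsMarkedFilling (SCell lam) T ∧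
          ∀ k, d k = Set.ncard {c : ℕ × ℕ | mval (T c.1 c.2) = k + 1}} : ℕ) : ℤ) = _
    rw [hcard]
    push_cast
    ring
  constructor
  · intro d
    rw [MvPowerSeries.coeff_apply, key d]
    exact dvd_mul_right _ _
  · refine ⟨fun d => (Nat.card {T : ℕ → ℕ → ℕ // (IsMarkedFilling (SCell lam) T ∧
          ∀ k, d k = Set.ncard {c : ℕ × ℕ | mval (T c.1 c.2) = k + 1}) ∧
          ∀ i, T i i % 2 = 0} : ℤ), ?_⟩
    apply MvPowerSeries.ext
    intro d
    rw [MvPowerSeries.coeff_apply, key d]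
    rfl

end SLR
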